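/- Let k > 0 and d > 0, and let x₁, x₂ : [0, ∞) → ℝ be differentiable with x₁'(t) = x₂(t) and x₂'(t) = −k x₂(t) for all t ≥ 0. Then for all t ≥ 0, |x₁(t) − x₁(0)| ≤ |x₂(0)| / k. Consequently, if |x₂(0)|/k ≤ x₁(0) and x₁(0) ≤ d − |x₂(0)|/k, then x₁(t) ∈ [0, d] for all t ≥ 0, i.e., the output remains in the box [0, d] forever. -/

import Mathlib

/-- Under the damping feedback `u = -k x₂` (`k > 0`) for the double integrator
`ẋ₁ = x₂`, `ẋ₂ = -k x₂`, the position never moves further than `|x₂(0)|/k` from its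
initial value; consequently, if the initial position is at least `|x₂(0)|/k` away from
both faces of the box `[0, d]`, the output remains in the box forever. -/
theorem hold_primitive_stays_in_box (k d : ℝ) (hk : 0 < k) (hd : 0 < d)
    (x₁ x₂ : ℝ → ℝ)
    (h1 : ∀ t : ℝ, 0 ≤ t → HasDerivAt x₁ (x₂ t) t)
    (h2 : ∀ t : ℝ, 0 ≤ t → HasDerivAt x₂ (-k * x₂ t) t) :
    (∀ t : ℝ, 0 ≤ t → |x₁ t - x₁ 0| ≤ |x₂ 0| / k) ∧
      ((|x₂ 0| / k ≤ x₁ 0 ∧ x₁ 0 ≤ d - |x₂ 0| / k) →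
        ∀ t : ℝ, 0 ≤ t → x₁ t ∈ Set.Icc (0 : ℝ) d) := by
  -- g s = x₂ s * exp (k s) has zero derivative on [0,∞)
  have hgd : ∀ s : ℝ, 0 ≤ s →
      HasDerivAt (fun s => x₂ s * Real.exp (k * s)) 0 s := by
    intro s hs
    have hexp : HasDerivAt (fun s : ℝ => Real.exp (k * s)) (Real.exp (k * s) * k) s := by
      have := (Real.hasDerivAt_exp (k * s)).comp s
        ((hasDerivAt_id s).const_mul k)
      rw [show Real.exp (k * s) * k = Real.exp (k * s) * (k * 1) by ring]; exact this
    have := (h2 s hs).mul hexp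
    rw [show -k * x₂ s * Real.exp (k * s) + x₂ s * (Real.exp (k * s) * k) = 0 by ring] at this
    exact this
  have hx2 : ∀ t : ℝ, 0 ≤ t → x₂ t = x₂ 0 * Real.exp (-k * t) := by
    intro t ht
    have hcont : ContinuousOn (fun s => x₂ s * Real.exp (k * s)) (Set.Icc 0 t) :=
      fun s hs => ((hgd s hs.1).continuousAt).continuousWithinAt
    have := constant_of_has_deriv_right_zero hcont
      (fun s hs => (hgd s hs.1).hasDerivWithinAt) t (Set.right_mem_Icc.2 ht)
    have heq : x₂ t * Real.exp (k * t) = x₂ 0 := by simpa using this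
    have hpos : Real.exp (k * t) ≠ 0 := Real.exp_ne_zero _
    field_simp [Real.exp_neg] at *
    rw [← heq, mul_assoc, ← Real.exp_add]; simp
  -- F s = x₁ s + x₂ s / k is constant
  have hFd : ∀ s : ℝ, 0 ≤ s → HasDerivAt (fun s => x₁ s + x₂ s / k) 0 s := by
    intro s hs
    have := (h1 s hs).add ((h2 s hs).div_const k)
    rw [show x₂ s + -k * x₂ s / k = 0 by rw [neg_mul, neg_div, mul_div_cancel_left₀ _ hk.ne']; ring] at this
    exact this
  have hx1 : ∀ t : ℝ, 0 ≤ t → x₁ t = x₁ 0 + (x₂ 0 - x₂ t) / k := by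
    intro t ht
    have hcont : ContinuousOn (fun s => x₁ s + x₂ s / k) (Set.Icc 0 t) :=
      fun s hs => ((hFd s hs.1).continuousAt).continuousWithinAt
    have := constant_of_has_deriv_right_zero hcont
      (fun s hs => (hFd s hs.1).hasDerivWithinAt) t (Set.right_mem_Icc.2 ht)
    have heq : x₁ t + x₂ t / k = x₁ 0 + x₂ 0 / k := this
    field_simp at heq ⊢
    linarith
  have main : ∀ t : ℝ, 0 ≤ t → |x₁ t - x₁ 0| ≤ |x₂ 0| / k := by
    intro t ht
    have he : Real.exp (-k * t) ≤ 1 := by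
      apply Real.exp_le_one_iff.2
      nlinarith
    have he0 : 0 < Real.exp (-k * t) := Real.exp_pos _
    have : x₁ t - x₁ 0 = x₂ 0 * (1 - Real.exp (-k * t)) / k := by
      rw [hx1 t ht, hx2 t ht]; ring
    rw [this, abs_div, abs_of_pos hk, abs_mul]
    gcongr
    calc |x₂ 0| * |1 - Real.exp (-k * t)| ≤ |x₂ 0| * 1 := by
          apply mul_le_mul_of_nonneg_left _ (abs_nonneg _)
          rw [abs_of_nonneg (by linarith)]; linarith
      _ = |x₂ 0| := mul_one _
  refine ⟨main, fun ⟨hl, hr⟩ t ht => ?_⟩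
  have := main t ht
  have := abs_le.1 this
  constructor <;> linarith [this.1, this.2]
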